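/- In the 'tower' graph G_κ consisting of levels L_1,…,L_κ with |L_i|=i, complete bipartite connections between consecutive levels, and two leaves attached to the single node of L_1, with strict majority thresholds, every ordinary target set S in the non-progressive model satisfies |(L_{i-1}∪L_{i+1})∩S| ≥ i+1 for every 2≤i≤κ−1. -/

import Mathlib

open Finset
open scoped Classical

variable {V : Type*}

noncomputable def Qseq (G : SimpleGraph V) [Fintype V] (τ : V → ℕ) (S : ℕ → Finset V) :
    ℕ → Finset V
  | 0 => ∅
  | i + 1 => Finset.univ.filter fun v =>
      τ v ≤ (G.neighborFinset v ∩ (S i ∪ Qseq G τ S i)).card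

def IsTTS (G : SimpleGraph V) [Fintype V] (τ : V → ℕ) (S : ℕ → Finset V) (k : ℕ) : Prop :=
  S k = ∅ ∧ Qseq G τ S k = Finset.univ

def ttsSize (S : ℕ → Finset V) (k : ℕ) : ℕ := ∑ i ∈ Finset.range (k + 1), (S i).card

noncomputable def strictMaj (G : SimpleGraph V) [Fintype V] (v : V) : ℕ := (G.degree v + 2) / 2

noncomputable def npStep (G : SimpleGraph V) [Fintype V] (τ : V → ℕ) (A : Finset V) : Finset V :=
  Finset.univ.filter fun v => τ v ≤ (G.neighborFinset v ∩ A).card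

def IsTS (G : SimpleGraph V) [Fintype V] (τ : V → ℕ) (S : Finset V) : Prop :=
  ∃ i : ℕ, (npStep G τ)^[i] S = Finset.univ

noncomputable def MTT (G : SimpleGraph V) [Fintype V] (τ : V → ℕ) : ℕ :=
  sInf {m | ∃ (S : ℕ → Finset V) (k : ℕ), IsTTS G τ S k ∧ ttsSize S k = m}

/-- Vertex type of the tower graph: levels `L_1, …, L_κ` with `|L_i| = i`
(a pair `⟨i, j⟩` with `i : Fin κ` encodes the `j`-th node of level `L_{i+1}`),
plus two extra leaf nodes. -/
def towerV (κ : ℕ) : Type := (Σ i : Fin κ, Fin (i + 1)) ⊕ Fin 2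

instance (κ : ℕ) : Fintype (towerV κ) := by unfold towerV; infer_instance

/-- The level of a vertex: level nodes of `L_i` have level `i ∈ {1, …, κ}`, and the two
leaves have level `0`. -/
def lev {κ : ℕ} : towerV κ → ℕ
  | Sum.inl x => (x.1 : ℕ) + 1
  | Sum.inr _ => 0

/-- The tower graph `G_κ`: each node of `L_i` is adjacent to every node of `L_{i+1}`,
and the two leaves (level `0`) are adjacent exactly to the unique node of `L_1`. -/
def towerGraph (κ : ℕ) : SimpleGraph (towerV κ) where
  Adj a b := lev a + 1 = lev b ∨ lev b + 1 = lev a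
  symm := ⟨fun a b h => h.symm⟩
  loopless := ⟨by
    intro a h
    rcases h with h | h <;> omega⟩

/-- The set `L_i` of nodes of level `i` (for `i = 0` this is the pair of leaves). -/
noncomputable def levelSet (κ : ℕ) (i : ℕ) : Finset (towerV κ) :=
  Finset.univ.filter fun v => lev v = i

namespace TowerAux
variable {κ : ℕ}

lemma mem_levelSet {j : ℕ} {v : towerV κ} : v ∈ levelSet κ j ↔ lev v = j := by
  simp [levelSet]

lemma lev_le (v : towerV κ) : lev v ≤ κ := by
  cases v with
  | inl x => exact x.1.isLt
  | inr _ => simp [lev]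

lemma adj_iff {a b : towerV κ} :
    (towerGraph κ).Adj a b ↔ lev a + 1 = lev b ∨ lev b + 1 = lev a := Iff.rfl

lemma nbr_zero {v : towerV κ} (h : lev v = 0) :
    (towerGraph κ).neighborFinset v = levelSet κ 1 := by
  ext b
  simp only [SimpleGraph.mem_neighborFinset, adj_iff, mem_levelSet, h]
  omega

lemma nbr_pos {v : towerV κ} (h : 1 ≤ lev v) :
    (towerGraph κ).neighborFinset v = levelSet κ (lev v - 1) ∪ levelSet κ (lev v + 1) := by
  ext b
  simp only [SimpleGraph.mem_neighborFinset, adj_iff, mem_levelSet, Finset.mem_union]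
  omega

lemma levelSet_empty {j : ℕ} (h : κ < j) : levelSet κ j = ∅ := by
  rw [Finset.eq_empty_iff_forall_notMem]
  intro v hv
  rw [mem_levelSet] at hv
  have := lev_le v
  omega

lemma card_levelSet_zero : (levelSet κ 0).card = 2 := by
  have : levelSet κ 0 = @insert (towerV κ) _ _ (Sum.inr 0) (@singleton (towerV κ) _ _ (Sum.inr 1)) := by
    ext v
    rw [mem_levelSet]
    cases v with
    | inl x =>
      refine ⟨fun h => by simp [lev] at h, fun h => ?_⟩
      rcases Finset.mem_insert.mp h with h | h
      · exact absurd h Sum.inl_ne_inr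
      · exact absurd (Finset.mem_singleton.mp h) Sum.inl_ne_inr
    | inr b =>
      simp only [lev, Finset.mem_insert, Finset.mem_singleton, true_iff]
      have : b = 0 ∨ b = 1 := by omega
      rcases this with h | h <;> simp [h]
      · exact Finset.mem_insert_self _ _
      · exact Finset.mem_insert_of_mem (Finset.mem_singleton_self _)
  rw [this]
  exact Finset.card_pair (by intro h; exact absurd (Sum.inr.inj h) (by decide))

lemma card_levelSet {j : ℕ} (h1 : 1 ≤ j) (h2 : j ≤ κ) : (levelSet κ j).card = j := by
  apply Finset.card_eq_of_bijective
    (fun m hm => Sum.inl ⟨⟨j - 1, by omega⟩, ⟨m, by simp only [Fin.val_mk]; omega⟩⟩)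
  · intro a ha
    have ha : lev (κ := κ) a = j := mem_levelSet.mp ha
    cases a with
    | inr b => simp [lev] at ha; omega
    | inl x =>
      obtain ⟨⟨a, hak⟩, ⟨b, hb⟩⟩ := x
      simp only [lev, Fin.val_mk] at ha hb
      obtain rfl : a = j - 1 := by omega
      exact ⟨b, by omega, rfl⟩
  · intro m hm
    refine mem_levelSet.mpr ?_
    simp only [lev, Fin.val_mk]
    omega
  · intro m n hm hn hEq
    simpa using hEq

lemma degree_eq (v : towerV κ) (h : 1 ≤ lev v) :
    (towerGraph κ).degree v
      = (levelSet κ (lev v - 1)).card + (levelSet κ (lev v + 1)).card := by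
  rw [← SimpleGraph.card_neighborFinset_eq_degree, nbr_pos h,
    Finset.card_union_of_disjoint]
  rw [Finset.disjoint_left]
  intro a ha ha'
  rw [mem_levelSet] at ha ha'
  omega

lemma tau_zero (hκ : 1 ≤ κ) {v : towerV κ} (h : lev v = 0) :
    strictMaj (towerGraph κ) v = 1 := by
  have hd : (towerGraph κ).degree v = 1 := by
    rw [← SimpleGraph.card_neighborFinset_eq_degree, nbr_zero h, card_levelSet le_rfl hκ]
  rw [strictMaj, hd]

lemma tau_one (hκ : 2 ≤ κ) {v : towerV κ} (h : lev v = 1) :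
    strictMaj (towerGraph κ) v = 3 := by
  have hd : (towerGraph κ).degree v = 4 := by
    rw [degree_eq v (by omega), h]
    norm_num [card_levelSet_zero, card_levelSet (by omega : 1 ≤ 2) hκ]
  rw [strictMaj, hd]

lemma tau_mid {v : towerV κ} (h2 : 2 ≤ lev v) (hk : lev v + 1 ≤ κ) :
    strictMaj (towerGraph κ) v = lev v + 1 := by
  have hd : (towerGraph κ).degree v = 2 * lev v := by
    rw [degree_eq v (by omega), card_levelSet (by omega) (by omega),
      card_levelSet (by omega) hk]
    omega
  rw [strictMaj, hd]
  omega

lemma mem_npStep {W : Type*} {G : SimpleGraph W} [Fintype W] {τ : W → ℕ}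
    {A : Finset W} {v : W} :
    v ∈ npStep G τ A ↔ τ v ≤ (G.neighborFinset v ∩ A).card := by
  simp [npStep]

lemma empA (hκ : 4 ≤ κ) {A : Finset (towerV κ)} {j : ℕ} (hj : j ≤ κ - 2)
    (h : levelSet κ (j + 1) ∩ A = ∅) :
    levelSet κ j ∩ npStep (towerGraph κ) (strictMaj (towerGraph κ)) A = ∅ := by
  rw [Finset.eq_empty_iff_forall_notMem]
  intro v hv
  rw [Finset.mem_inter, mem_levelSet, mem_npStep] at hv
  obtain ⟨hlev, hτ⟩ := hv
  have hnotup : ∀ x ∈ (towerGraph κ).neighborFinset v ∩ A, x ∉ levelSet κ (j + 1) := by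
    intro x hx hx'
    have : x ∈ levelSet κ (j + 1) ∩ A := by
      rw [Finset.mem_inter]
      exact ⟨hx', (Finset.mem_inter.mp hx).2⟩
    rw [h] at this
    exact absurd this (Finset.notMem_empty x)
  rcases Nat.lt_or_ge j 2 with hj2 | hj2
  · interval_cases j
    · rw [tau_zero (by omega) hlev] at hτ
      have hsub : (towerGraph κ).neighborFinset v ∩ A = ∅ := by
        rw [Finset.eq_empty_iff_forall_notMem]
        intro x hx
        have hx1 := (Finset.mem_inter.mp hx).1
        rw [nbr_zero hlev] at hx1
        exact hnotup x hx hx1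
      rw [hsub] at hτ
      simp at hτ
    · rw [tau_one (by omega) hlev] at hτ
      have hsub : (towerGraph κ).neighborFinset v ∩ A ⊆ levelSet κ 0 := by
        intro x hx
        have hx1 := (Finset.mem_inter.mp hx).1
        rw [nbr_pos (by omega), hlev, Finset.mem_union] at hx1
        rcases hx1 with hx1 | hx1
        · exact hx1
        · exact absurd hx1 (hnotup x hx)
      have := (Finset.card_le_card hsub).trans_eq card_levelSet_zero
      omega
  · rw [tau_mid (by omega) (by omega)] at hτ
    have hsub : (towerGraph κ).neighborFinset v ∩ A ⊆ levelSet κ (j - 1) := by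
      intro x hx
      have hx1 := (Finset.mem_inter.mp hx).1
      rw [nbr_pos (by omega), hlev, Finset.mem_union] at hx1
      rcases hx1 with hx1 | hx1
      · exact hx1
      · exact absurd hx1 (hnotup x hx)
    have := (Finset.card_le_card hsub).trans_eq (card_levelSet (by omega) (by omega))
    omega

lemma empB (hκ : 4 ≤ κ) {A : Finset (towerV κ)} (h : levelSet κ 0 ∩ A = ∅) :
    levelSet κ 1 ∩ npStep (towerGraph κ) (strictMaj (towerGraph κ)) A = ∅ := by
  rw [Finset.eq_empty_iff_forall_notMem]
  intro v hv
  rw [Finset.mem_inter, mem_levelSet, mem_npStep] at hv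
  obtain ⟨hlev, hτ⟩ := hv
  rw [tau_one (by omega) hlev] at hτ
  have hsub : (towerGraph κ).neighborFinset v ∩ A ⊆ levelSet κ 2 := by
    intro x hx
    obtain ⟨hx1, hx2⟩ := Finset.mem_inter.mp hx
    rw [nbr_pos (by omega), hlev, Finset.mem_union] at hx1
    rcases hx1 with hx1 | hx1
    · exfalso
      have : x ∈ levelSet κ 0 ∩ A := Finset.mem_inter.mpr ⟨hx1, hx2⟩
      rw [h] at this
      exact Finset.notMem_empty x this
    · exact hx1
  have := (Finset.card_le_card hsub).trans_eq (card_levelSet (by omega) (by omega))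
  omega

lemma npStep_univ (hκ : 4 ≤ κ) :
    npStep (towerGraph κ) (strictMaj (towerGraph κ)) Finset.univ = Finset.univ := by
  rw [Finset.eq_univ_iff_forall]
  intro v
  rw [mem_npStep, Finset.inter_univ, SimpleGraph.card_neighborFinset_eq_degree, strictMaj]
  have hd : 1 ≤ (towerGraph κ).degree v := by
    rcases Nat.eq_zero_or_pos (lev v) with h0 | h1
    · rw [← SimpleGraph.card_neighborFinset_eq_degree, nbr_zero h0,
        card_levelSet le_rfl (by omega)]
    · rw [degree_eq v h1]
      rcases Nat.lt_or_ge (lev v) κ with hlt | hge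
      · have : (levelSet κ (lev v + 1)).card = lev v + 1 := card_levelSet (by omega) (by omega)
        omega
      · have hlev : lev v = κ := le_antisymm (lev_le v) hge
        have : (levelSet κ (lev v - 1)).card = lev v - 1 := card_levelSet (by omega) (by omega)
        omega
  omega

end TowerAux

/-- In the tower graph `G_κ` (`κ ≥ 4`) with strict majority thresholds,
every ordinary target set `S` in the non-progressive model satisfies
`|(L_{i−1} ∪ L_{i+1}) ∩ S| ≥ i + 1` for every `2 ≤ i ≤ κ − 1`. -/
theorem stmt9 (κ : ℕ) (hκ : 4 ≤ κ) (S : Finset (towerV κ))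
    (hS : IsTS (towerGraph κ) (strictMaj (towerGraph κ)) S)
    (i : ℕ) (hi2 : 2 ≤ i) (hiκ : i ≤ κ - 1) :
    i + 1 ≤ ((levelSet κ (i - 1) ∪ levelSet κ (i + 1)) ∩ S).card := by
  by_contra hcon
  push_neg at hcon
  have hcard : ((levelSet κ (i - 1) ∪ levelSet κ (i + 1)) ∩ S).card ≤ i := by omega
  obtain ⟨T, hT⟩ := hS
  set f := npStep (towerGraph κ) (strictMaj (towerGraph κ)) with hf
  set A : ℕ → Finset (towerV κ) := fun t => f^[t] S with hA
  have hAsucc : ∀ t, A (t + 1) = f (A t) := by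
    intro t
    simp only [hA]
    rw [Function.iterate_succ_apply']
  -- Level i is empty at time 1
  have hEmpI : levelSet κ i ∩ A 1 = ∅ := by
    rw [Finset.eq_empty_iff_forall_notMem]
    intro v hv
    rw [Finset.mem_inter, TowerAux.mem_levelSet] at hv
    obtain ⟨hlev, hv1⟩ := hv
    have hv1' : v ∈ f S := by simpa [hA] using hv1
    rw [hf, TowerAux.mem_npStep] at hv1'
    rw [TowerAux.tau_mid (by omega) (by omega)] at hv1'
    have hsub : (towerGraph κ).neighborFinset v ∩ S
        ⊆ (levelSet κ (i - 1) ∪ levelSet κ (i + 1)) ∩ S := by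
      intro x hx
      obtain ⟨hx1, hx2⟩ := Finset.mem_inter.mp hx
      rw [TowerAux.nbr_pos (by omega), hlev] at hx1
      exact Finset.mem_inter.mpr ⟨hx1, hx2⟩
    have := (Finset.card_le_card hsub).trans hcard
    omega
  -- Cascade downwards
  have casc : ∀ k, k ≤ i → levelSet κ (i - k) ∩ A (1 + k) = ∅ := by
    intro k
    induction k with
    | zero => intro _; simpa using hEmpI
    | succ k ih =>
      intro hk
      have hprev := ih (by omega)
      have harith : i - (k + 1) + 1 = i - k := by omega
      have := TowerAux.empA hκ (A := A (1 + k)) (j := i - (k + 1)) (by omega)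
        (by rw [harith]; exact hprev)
      rw [← hf, ← hAsucc (1 + k)] at this
      have harith2 : 1 + k + 1 = 1 + (k + 1) := by omega
      rwa [harith2] at this
  -- Alternating emptiness from time i on
  have alt : ∀ m, levelSet κ 1 ∩ A (i + 2 * m) = ∅ ∧ levelSet κ 0 ∩ A (i + 2 * m + 1) = ∅ := by
    intro m
    induction m with
    | zero =>
      constructor
      · have := casc (i - 1) (by omega)
        have h1 : i - (i - 1) = 1 := by omega
        have h2 : 1 + (i - 1) = i := by omega
        rw [h1, h2] at this
        simpa using this
      · have h1 := casc (i - 1) (by omega)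
        rw [show i - (i - 1) = 1 by omega, show 1 + (i - 1) = i by omega] at h1
        have := TowerAux.empA hκ (A := A i) (j := 0) (by omega) (by simpa using h1)
        rw [← hf, ← hAsucc i] at this
        simpa using this
    | succ m ih =>
      obtain ⟨ih1, ih0⟩ := ih
      have hL1 : levelSet κ 1 ∩ A (i + 2 * (m + 1)) = ∅ := by
        have := TowerAux.empB hκ ih0
        rw [← hf, ← hAsucc (i + 2 * m + 1)] at this
        rwa [show i + 2 * m + 1 + 1 = i + 2 * (m + 1) by omega] at this
      refine ⟨hL1, ?_⟩
      have := TowerAux.empA hκ (A := A (i + 2 * (m + 1))) (j := 0) (by omega)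
        (by simpa using hL1)
      rw [← hf, ← hAsucc (i + 2 * (m + 1))] at this
      simpa using this
  -- A s ≠ univ for s ≥ i
  have hne : ∀ s, i ≤ s → A s ≠ Finset.univ := by
    intro s hs hsu
    rcases Nat.even_or_odd (s - i) with ⟨m, hm⟩ | ⟨m, hm⟩
    · have h1 := (alt m).1
      rw [show i + 2 * m = s by omega, hsu, Finset.inter_univ] at h1
      have := TowerAux.card_levelSet (κ := κ) (j := 1) le_rfl (by omega)
      rw [h1] at this
      simp at this
    · have h0 := (alt m).2
      rw [show i + 2 * m + 1 = s by omega, hsu, Finset.inter_univ] at h0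
      have := TowerAux.card_levelSet_zero (κ := κ)
      rw [h0] at this
      simp at this
  -- But A (max T i) = univ
  have hfix : ∀ n, A (T + n) = Finset.univ := by
    intro n
    induction n with
    | zero => simpa [hA] using hT
    | succ n ih =>
      rw [show T + (n + 1) = (T + n) + 1 by omega, hAsucc, ih]
      exact TowerAux.npStep_univ hκ
  exact hne (T + i) (by omega) (hfix i)
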